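/- Let v ≠ 0 be a real constant and suppose ξ : ℝ → ℝ is twice differentiable, satisfies ξ'' = v(ξ' + 1) on ℝ, and satisfies the angular periodicity condition ξ(θ + 2π) − ξ(θ) ∈ 2πℤ for all θ. Then ξ' + 1 ≡ 0, i.e. ξ(θ) = −θ + θ₁ for some constant θ₁. -/

import Mathlib

open Real

/-- A continuous function with values in `2πℤ` is constant. -/
lemma aux_const (F : ℝ → ℝ) (hF : Continuous F)
    (hval : ∀ θ, ∃ k : ℤ, F θ = 2 * π * k) (a b : ℝ) : F a = F b := by
  by_contra hne
  wlog hlt : F a < F b generalizing a b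
  · exact this b a (Ne.symm hne) (lt_of_le_of_ne (not_lt.mp hlt) (Ne.symm hne))
  obtain ⟨ka, hka⟩ := hval a
  obtain ⟨kb, hkb⟩ := hval b
  have hkk : ka < kb := by
    by_contra h
    push_neg at h
    have : (kb : ℝ) ≤ ka := by exact_mod_cast h
    nlinarith [pi_pos]
  have hkk' : (ka : ℝ) + 1 ≤ kb := by exact_mod_cast hkk
  have hy : F a + π ∈ Set.uIcc (F a) (F b) := by
    apply Set.Icc_subset_uIcc
    constructor
    · linarith [pi_pos]
    · nlinarith [pi_pos]
  obtain ⟨θ, _, hθ⟩ := intermediate_value_uIcc hF.continuousOn hy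
  obtain ⟨k, hk⟩ := hval θ
  have heq : 2 * π * (k : ℝ) = 2 * π * ka + π := by rw [← hk, hθ, hka]
  have h1 : 2 * (k : ℝ) = 2 * (ka : ℝ) + 1 := by
    have h2 : π * (2 * (k : ℝ)) = π * (2 * (ka : ℝ) + 1) := by ring_nf; ring_nf at heq; linarith
    exact mul_left_cancel₀ pi_ne_zero h2
  have h3 : (2 * k : ℤ) = 2 * ka + 1 := by exact_mod_cast h1
  omega

theorem stmt2 (v : ℝ) (hv : v ≠ 0) (ξ : ℝ → ℝ)
    (hdiff : ∀ θ, DifferentiableAt ℝ ξ θ)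
    (hdiff2 : ∀ θ, DifferentiableAt ℝ (deriv ξ) θ)
    (hode : ∀ θ, deriv (deriv ξ) θ = v * (deriv ξ θ + 1))
    (hper : ∀ θ, ∃ k : ℤ, ξ (θ + 2 * π) - ξ θ = 2 * π * k) :
    (∀ θ, deriv ξ θ + 1 = 0) ∧ ∃ θ₁ : ℝ, ∀ θ, ξ θ = -θ + θ₁ := by
  set g : ℝ → ℝ := fun θ => deriv ξ θ + 1 with hg
  have hgd : ∀ θ, HasDerivAt g (v * g θ) θ := by
    intro θ
    have h1 : HasDerivAt (deriv ξ) (deriv (deriv ξ) θ) θ := (hdiff2 θ).hasDerivAt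
    rw [hode θ] at h1
    simpa [hg] using h1.add_const 1
  -- g θ = g 0 * exp (v θ)
  have key : ∀ θ, g θ = g 0 * Real.exp (v * θ) := by
    have hh : ∀ θ, HasDerivAt (fun θ => g θ * Real.exp (-(v * θ))) 0 θ := by
      intro θ
      have h2 : HasDerivAt (fun θ : ℝ => -(v * θ)) (-v) θ := by
        simpa [Pi.neg_def] using ((hasDerivAt_id θ).const_mul v).neg
      have h3 : HasDerivAt (fun θ => g θ * Real.exp (-(v * θ))) _ θ := (hgd θ).mul h2.exp
      convert h3 using 1
      ring
    have hconst : ∀ θ, g θ * Real.exp (-(v * θ)) = g 0 * Real.exp (-(v * 0)) := by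
      intro θ
      exact is_const_of_deriv_eq_zero (fun x => (hh x).differentiableAt)
        (fun x => (hh x).deriv) θ 0
    intro θ
    have hc := hconst θ
    simp only [mul_zero, neg_zero, Real.exp_zero, mul_one] at hc
    rw [← hc, mul_assoc, ← Real.exp_add]
    simp
  -- F is constant
  set F : ℝ → ℝ := fun θ => ξ (θ + 2 * π) - ξ θ with hF
  have hξc : Continuous ξ := Differentiable.continuous (fun θ => hdiff θ)
  have hFc : Continuous F := (hξc.comp (continuous_id.add continuous_const)).sub hξc
  have hFconst : ∀ θ, F θ = F 0 := fun θ => aux_const F hFc hper θ 0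
  -- derivative of F at 0 is 0 and also deriv ξ (2π) - deriv ξ 0
  have hFd : HasDerivAt F (deriv ξ (0 + 2 * π) - deriv ξ 0) 0 := by
    have h1 : HasDerivAt (fun θ => ξ (θ + 2 * π)) (deriv ξ (0 + 2 * π)) 0 := by
      simpa [Function.comp_def] using (HasDerivAt.comp 0 (hdiff (0 + 2 * π)).hasDerivAt
        ((hasDerivAt_id 0).add_const (2 * π)))
    exact h1.sub (hdiff 0).hasDerivAt
  have hFd0 : HasDerivAt F 0 0 := by
    have : F = fun _ => F 0 := funext hFconst
    rw [this]
    exact hasDerivAt_const 0 (F 0)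
  have hper' : deriv ξ (0 + 2 * π) - deriv ξ 0 = 0 := hFd.unique hFd0
  have hg20 : g (2 * π) = g 0 := by
    simp only [hg]
    simp only [zero_add] at hper'
    linarith
  have hc0 : g 0 = 0 := by
    rw [key (2 * π)] at hg20
    by_contra hc
    have : Real.exp (v * (2 * π)) = 1 :=
      mul_left_cancel₀ hc (by rw [mul_one]; exact hg20)
    rw [Real.exp_eq_one_iff] at this
    have : v = 0 ∨ 2 * π = 0 := mul_eq_zero.mp this
    rcases this with h | h
    · exact hv h
    · exact absurd h (by positivity)
  have hgz : ∀ θ, deriv ξ θ + 1 = 0 := by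
    intro θ
    have := key θ
    rw [hc0] at this
    simpa [hg] using this
  refine ⟨hgz, ξ 0, ?_⟩
  intro θ
  have hψ : ∀ x, HasDerivAt (fun t => ξ t + t) 0 x := by
    intro x
    have := (hdiff x).hasDerivAt.add (hasDerivAt_id x)
    simpa [hgz x, Pi.add_def] using this
  have := is_const_of_deriv_eq_zero (fun x => (hψ x).differentiableAt)
    (fun x => (hψ x).deriv) θ 0
  simp at this
  linarith
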